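/- For any k ≥ 1 and any simple graph G, the oriented graph G⃗^{(k)} (obtained by replacing each edge uv of G by two internally disjoint oriented paths of length 4k from u to v, one with an even number of forward arcs and one with an odd number of forward arcs) admits a pushable homomorphism to the directed cycle C⃗_{2k+1} if and only if G is properly (2k+1)-colorable. -/

import Mathlib

/-- Internal vertices of the gadget `G⃗⁽ᵏ⁾`: for each edge of `G` (recorded as an ordered
pair `(u, v)` with `u < v`) and each of the two replacement paths (`Bool`), there are
`4k - 1` internal vertices. -/
def GadgetVertex (k : ℕ) {V : Type*} [LinearOrder V] (G : SimpleGraph V) : Type _ :=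
  V ⊕ ({p : V × V // G.Adj p.1 p.2 ∧ p.1 < p.2} × Bool × Fin (4 * k - 1))

/-- The arcs of the gadget `G⃗⁽ᵏ⁾`: each edge `uv` of `G` is replaced by two internally
disjoint oriented paths of length `4k` from `u` to `v`. The path indexed `false` has all
`4k` arcs forward (an even number of forward arcs); the path indexed `true` has its first
arc backward and the remaining `4k - 1` arcs forward (an odd number of forward arcs). -/
def GadgetArc (k : ℕ) {V : Type*} [LinearOrder V] (G : SimpleGraph V) :
    GadgetVertex k G → GadgetVertex k G → Prop
  | Sum.inl u, Sum.inr ⟨e, b, t⟩ => (t : ℕ) = 0 ∧ u = e.1.1 ∧ b = false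
  | Sum.inr ⟨e, b, t⟩, Sum.inl u =>
      ((t : ℕ) = 0 ∧ u = e.1.1 ∧ b = true) ∨ ((t : ℕ) = 4 * k - 2 ∧ u = e.1.2)
  | Sum.inr ⟨e, b, t⟩, Sum.inr ⟨e', b', t'⟩ => e = e' ∧ b = b' ∧ (t' : ℕ) = (t : ℕ) + 1
  | Sum.inl _, Sum.inl _ => False


def rVal (k : ℕ) (d : ZMod (2*k+1)) : ℕ :=
  2 * (((k+1)^2 * ((4*k : ℕ) - d) : ZMod (2*k+1))).val

def aVal (k : ℕ) (d : ZMod (2*k+1)) : ℕ :=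
  if (((k+1) * ((4*k : ℕ) - d) : ZMod (2*k+1))).val % 2 = 1
  then (((k+1) * ((4*k : ℕ) - d) : ZMod (2*k+1))).val
  else (((k+1) * ((4*k : ℕ) - d) : ZMod (2*k+1))).val + (2*k+1)


lemma val_cast_back {n : ℕ} [NeZero n] (x : ZMod n) : ((x.val : ℕ) : ZMod n) = x := by
  rw [ZMod.natCast_val, ZMod.cast_id]

lemma rVal_even (k : ℕ) (d : ZMod (2*k+1)) : rVal k d % 2 = 0 := by
  simp [rVal, Nat.mul_mod_right]

lemma rVal_le (k : ℕ) (d : ZMod (2*k+1)) : rVal k d ≤ 4*k := by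
  haveI : NeZero (2*k+1) := ⟨by omega⟩
  have := ZMod.val_lt (((k+1)^2 * ((4*k : ℕ) - d) : ZMod (2*k+1)))
  unfold rVal; omega

lemma rVal_key (k : ℕ) (d : ZMod (2*k+1)) :
    ((4*k : ℕ) : ZMod (2*k+1)) - 2 * ((rVal k d : ℕ) : ZMod (2*k+1)) = d := by
  haveI : NeZero (2*k+1) := ⟨by omega⟩
  have h0 : ((2*k+1 : ℕ) : ZMod (2*k+1)) = 0 := ZMod.natCast_self _
  unfold rVal
  push_cast [val_cast_back] at *
  linear_combination (-(4*(k:ZMod (2*k+1)) - d) * (2*(k:ZMod (2*k+1))+3)) * h0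

lemma aVal_odd (k : ℕ) (d : ZMod (2*k+1)) : aVal k d % 2 = 1 := by
  unfold aVal; split <;> omega

lemma aVal_cast (k : ℕ) (d : ZMod (2*k+1)) :
    ((aVal k d : ℕ) : ZMod (2*k+1)) = (k+1) * ((4*k : ℕ) - d) := by
  haveI : NeZero (2*k+1) := ⟨by omega⟩
  have h0 : ((2*k+1 : ℕ) : ZMod (2*k+1)) = 0 := ZMod.natCast_self _
  unfold aVal
  split
  · exact val_cast_back _
  · push_cast [val_cast_back] at h0 ⊢
    linear_combination h0

lemma aVal_key (k : ℕ) (d : ZMod (2*k+1)) :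
    ((4*k : ℕ) : ZMod (2*k+1)) - 2 * ((aVal k d : ℕ) : ZMod (2*k+1)) = d := by
  have h0 : ((2*k+1 : ℕ) : ZMod (2*k+1)) = 0 := ZMod.natCast_self _
  rw [aVal_cast]
  push_cast at *
  linear_combination (-(4*(k:ZMod (2*k+1)) - d)) * h0

lemma aVal_le (k : ℕ) (hk : 1 ≤ k) (d : ZMod (2*k+1)) (hd : d ≠ 0) :
    aVal k d ≤ 4*k - 1 := by
  haveI : NeZero (2*k+1) := ⟨by omega⟩
  have h0 : ((2*k+1 : ℕ) : ZMod (2*k+1)) = 0 := ZMod.natCast_self _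
  have hlt := ZMod.val_lt (((k+1) * ((4*k : ℕ) - d) : ZMod (2*k+1)))
  have hne : (((k+1) * ((4*k : ℕ) - d) : ZMod (2*k+1))).val ≠ 2*k := by
    intro h
    apply hd
    have heq : (((k+1) * ((4*k : ℕ) - d) : ZMod (2*k+1))) = ((2*k : ℕ) : ZMod (2*k+1)) := by
      rw [← val_cast_back (((k+1) * ((4*k : ℕ) - d) : ZMod (2*k+1))), h]
    push_cast at heq h0
    linear_combination -2*heq + (4*(k:ZMod (2*k+1)) - d) * h0
  unfold aVal
  split
  · omega
  · rename_i h
    omega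

lemma aVal_ge (k : ℕ) (d : ZMod (2*k+1)) : 1 ≤ aVal k d := by
  have := aVal_odd k d; omega


lemma bool_parity (g : ℕ → Bool) (m : ℕ) :
    g m = xor (g 0) (decide ((∑ q ∈ Finset.range m, if g q = g (q+1) then 0 else 1) % 2 = 1)) := by
  induction m with
  | zero => simp
  | succ m ih =>
    rw [Finset.sum_range_succ]
    by_cases h : g m = g (m+1)
    · simp only [h, if_pos rfl]
      rw [← h]; simpa using ih
    · simp only [if_neg h]
      rw [show (g (m+1)) = !(g m) by revert h; cases g m <;> cases g (m+1) <;> simp]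
      rw [ih]
      rcases Nat.even_or_odd (∑ q ∈ Finset.range m, if g q = g (q+1) then 0 else 1) with he | ho
      · have h1 : (∑ q ∈ Finset.range m, if g q = g (q+1) then 0 else 1) % 2 = 0 := Nat.even_iff.mp he
        have h2 : ((∑ q ∈ Finset.range m, if g q = g (q+1) then 0 else 1) + 1) % 2 = 1 := by omega
        simp [h1, h2, Bool.xor_not]
      · have h1 : (∑ q ∈ Finset.range m, if g q = g (q+1) then 0 else 1) % 2 = 1 := Nat.odd_iff.mp ho
        have h2 : ((∑ q ∈ Finset.range m, if g q = g (q+1) then 0 else 1) + 1) % 2 = 0 := by omega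
        simp [h1, h2, Bool.xor_not]

lemma chain_lemma {n : ℕ} (g : ℕ → Bool) (φ : ℕ → ZMod n) (M : ℕ)
    (hstep : ∀ q < M, φ (q+1) = φ q + (if g q = g (q+1) then 1 else -1)) :
    ∀ m ≤ M, φ m = φ 0 + (m : ZMod n)
      - 2 * ((∑ q ∈ Finset.range m, if g q = g (q+1) then (0:ℕ) else 1 : ℕ) : ZMod n) := by
  intro m hm
  induction m with
  | zero => simp
  | succ m ih =>
    have h1 := hstep m (by omega)
    rw [Finset.sum_range_succ, h1, ih (by omega)]
    by_cases h : g m = g (m+1)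
    · simp only [if_pos h]; push_cast; ring
    · simp only [if_neg h]; push_cast; ring

lemma cast41 (k : ℕ) (hk : 1 ≤ k) :
    ((4*k-1 : ℕ) : ZMod (2*k+1)) = ((4*k : ℕ) : ZMod (2*k+1)) - 1 := by
  rw [Nat.cast_sub (by omega : 1 ≤ 4*k), Nat.cast_one]

lemma dvd_small (k : ℕ) (X : ℤ) (hd : (2*(k:ℤ)+1) ∣ X) (he : X % 2 = 0)
    (h1 : -(4*(k:ℤ)) ≤ X) (h2 : X ≤ 4*(k:ℤ)) : X = 0 := by
  obtain ⟨m, hm⟩ := hd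
  have hK : (0:ℤ) ≤ (k:ℤ) := Int.natCast_nonneg k
  have hme : Even m := by
    rcases (Int.even_mul.mp (Int.even_iff.mpr (hm ▸ he))) with h | h
    · exfalso; have := Int.even_iff.mp h; omega
    · exact h
  obtain ⟨m', hm'⟩ := hme
  rcases lt_trichotomy m' 0 with h | h | h
  · exfalso; nlinarith [hm, hm']
  · subst h; simp at hm'; subst hm'; simpa using hm
  · exfalso; nlinarith [hm, hm']

def pathVert (k : ℕ) {V : Type*} [LinearOrder V] (G : SimpleGraph V)
    (e : {p : V × V // G.Adj p.1 p.2 ∧ p.1 < p.2}) (b : Bool) (q : ℕ) : GadgetVertex k G :=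
  if hq : 1 ≤ q ∧ q ≤ 4*k-1 then Sum.inr (e, b, ⟨q-1, by omega⟩)
  else if q = 0 then Sum.inl e.1.1 else Sum.inl e.1.2

section PV
variable {k : ℕ} {V : Type*} [LinearOrder V] {G : SimpleGraph V}
  {e : {p : V × V // G.Adj p.1 p.2 ∧ p.1 < p.2}}

lemma pathVert_pos (b : Bool) (q : ℕ) (h : 1 ≤ q ∧ q ≤ 4*k-1) :
    pathVert k G e b q = Sum.inr (e, b, ⟨q-1, by omega⟩) := dif_pos h

lemma pathVert_zero (b : Bool) : pathVert k G e b 0 = Sum.inl e.1.1 := by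
  rw [pathVert]; exact (dif_neg (by omega)).trans (if_pos rfl)

lemma pathVert_last (hk : 1 ≤ k) (b : Bool) : pathVert k G e b (4*k) = Sum.inl e.1.2 := by
  rw [pathVert]; exact (dif_neg (by omega)).trans (if_neg (by omega))

lemma pathVert_arc (hk : 1 ≤ k) (b : Bool) (q : ℕ) (h1 : 1 ≤ q) (h2 : q ≤ 4*k-2) :
    GadgetArc k G (pathVert k G e b q) (pathVert k G e b (q+1)) := by
  rw [pathVert_pos b q ⟨h1, by omega⟩, pathVert_pos b (q+1) ⟨by omega, by omega⟩]
  exact ⟨rfl, rfl, by simp; omega⟩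

lemma pathVert_arc0f (hk : 1 ≤ k) :
    GadgetArc k G (pathVert k G e false 0) (pathVert k G e false 1) := by
  rw [pathVert_zero, pathVert_pos false 1 ⟨le_refl 1, by omega⟩]
  exact ⟨rfl, rfl, rfl⟩

lemma pathVert_arc0t (hk : 1 ≤ k) :
    GadgetArc k G (pathVert k G e true 1) (pathVert k G e true 0) := by
  rw [pathVert_zero, pathVert_pos true 1 ⟨le_refl 1, by omega⟩]
  exact Or.inl ⟨rfl, rfl, rfl⟩

lemma pathVert_arclast (hk : 1 ≤ k) (b : Bool) :
    GadgetArc k G (pathVert k G e b (4*k-1)) (pathVert k G e b (4*k)) := by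
  rw [pathVert_last hk, pathVert_pos b (4*k-1) ⟨by omega, le_refl _⟩]
  exact Or.inr ⟨by simp; omega, rfl⟩

end PV

lemma forward (k : ℕ) (hk : 1 ≤ k) {V : Type*} [LinearOrder V] (G : SimpleGraph V)
    (s : GadgetVertex k G → Bool) (f : GadgetVertex k G → ZMod (2 * k + 1))
    (H : ∀ x y, ((s x = s y ∧ GadgetArc k G x y) ∨ (s x ≠ s y ∧ GadgetArc k G y x)) →
          f y = f x + 1) :
    ∀ u v, G.Adj u v → u < v → f (Sum.inl u) ≠ f (Sum.inl v) := by
  intro u v hadj hlt hEq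
  set e : {p : V × V // G.Adj p.1 p.2 ∧ p.1 < p.2} := ⟨(u,v), hadj, hlt⟩ with he
  have step : ∀ x y, GadgetArc k G x y → f y = f x + (if s x = s y then 1 else -1) := by
    intro x y hxy
    by_cases hsx : s x = s y
    · rw [if_pos hsx]; exact H x y (Or.inl ⟨hsx, hxy⟩)
    · rw [if_neg hsx]
      have h2 : f x = f y + 1 := H y x (Or.inr ⟨fun h => hsx h.symm, hxy⟩)
      linear_combination -h2
  -- flip counts
  set Ff : ℕ := ∑ q ∈ Finset.range (4*k),
    if s (pathVert k G e false q) = s (pathVert k G e false (q+1)) then 0 else 1 with hFf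
  set Ft : ℕ := ∑ q ∈ Finset.range (4*k),
    if s (pathVert k G e true q) = s (pathVert k G e true (q+1)) then 0 else 1 with hFt
  set Ft' : ℕ := ∑ q ∈ Finset.range (4*k-1),
    if s (pathVert k G e true (q+1)) = s (pathVert k G e true (q+1+1)) then 0 else 1 with hFt'
  -- even path equation
  have hEven := chain_lemma (fun q => s (pathVert k G e false q))
    (fun q => f (pathVert k G e false q)) (4*k) (by
      intro q hq
      apply step
      rcases eq_or_ne q 0 with rfl | h0
      · exact pathVert_arc0f hk
      · rcases eq_or_ne q (4*k-1) with rfl | h1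
        · rw [show 4*k-1+1 = 4*k from by omega]
          exact pathVert_arclast hk false
        · exact pathVert_arc hk false q (by omega) (by omega)) (4*k) le_rfl
  -- odd path equation (shifted)
  have hOdd := chain_lemma (fun q => s (pathVert k G e true (q+1)))
    (fun q => f (pathVert k G e true (q+1))) (4*k-1) (by
      intro q hq
      apply step
      rcases eq_or_ne q (4*k-2) with rfl | h1
      · rw [show 4*k-2+1+1 = 4*k from by omega, show 4*k-2+1 = 4*k-1 from by omega]
        exact pathVert_arclast hk true
      · exact pathVert_arc hk true (q+1) (by omega) (by omega)) (4*k-1) le_rfl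
  have hOdd0 := step _ _ (pathVert_arc0t (e := e) hk)
  beta_reduce at hEven hOdd
  rw [← hFf] at hEven
  rw [← hFt'] at hOdd
  simp only [Nat.zero_add] at hOdd
  -- endpoints
  have hz : ∀ b, pathVert k G e b 0 = Sum.inl u := fun b => pathVert_zero b
  have hl : ∀ b, pathVert k G e b (4*k) = Sum.inl v := fun b => pathVert_last hk b
  rw [hz, hl] at hEven
  rw [show 4*k-1+1 = 4*k from by omega, hl] at hOdd
  rw [hz] at hOdd0
  -- parity of flips is the same on both paths
  have hpar : Ff % 2 = Ft % 2 := by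
    have h1 := bool_parity (fun q => s (pathVert k G e false q)) (4*k)
    have h2 := bool_parity (fun q => s (pathVert k G e true q)) (4*k)
    beta_reduce at h1 h2
    rw [hz, hl, ← hFf] at h1
    rw [hz, hl, ← hFt] at h2
    rw [h1] at h2
    cases hsu : s ((Sum.inl u) : GadgetVertex k G) <;> simp only [hsu, Bool.false_xor, Bool.true_xor] at h2
    · rw [decide_eq_decide] at h2; omega
    · have h3 : decide (Ff % 2 = 1) = decide (Ft % 2 = 1) := by
        cases hd1 : decide (Ff % 2 = 1) <;> cases hd2 : decide (Ft % 2 = 1) <;>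
          simp [hd1, hd2] at h2 ⊢
      rw [decide_eq_decide] at h3; omega
  -- bounds
  have hFfle : Ff ≤ 4*k := by
    calc Ff ≤ ∑ _q ∈ Finset.range (4*k), 1 := Finset.sum_le_sum (by intro i _; split <;> omega)
    _ = 4*k := by simp
  have hFt'le : Ft' ≤ 4*k-1 := by
    calc Ft' ≤ ∑ _q ∈ Finset.range (4*k-1), 1 := Finset.sum_le_sum (by intro i _; split <;> omega)
    _ = 4*k-1 := by simp
  -- split Ft
  have hsplit : Ft = Ft' + (if s (pathVert k G e true 0) = s (pathVert k G e true 1) then 0 else 1) := by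
    rw [hFt, hFt', show 4*k = (4*k-1)+1 from by omega, Finset.sum_range_succ']
    congr 1
  -- even path: Ff = 2k
  haveI : NeZero (2*k+1) := ⟨by omega⟩
  have hdf : ((2*k+1 : ℕ) : ℤ) ∣ (4*(k:ℤ) - 2*(Ff:ℤ)) := by
    rw [← ZMod.intCast_zmod_eq_zero_iff_dvd]
    push_cast
    push_cast at hEven
    linear_combination -hEven - hEq
  have hFf2k : Ff = 2*k := by
    have h0 := dvd_small k (4*(k:ℤ) - 2*(Ff:ℤ)) (by exact_mod_cast hdf) (by omega)
      (by push_cast; omega) (by push_cast; omega)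
    omega
  -- odd path
  rw [hz true] at hsplit
  rw [cast41 k hk] at hOdd
  by_cases hflip : s ((Sum.inl u) : GadgetVertex k G) = s (pathVert k G e true 1)
  · -- no flip on the reversed first arc
    rw [if_pos hflip.symm] at hOdd0
    have hFtEq : Ft = Ft' := by rw [hsplit, if_pos hflip]; omega
    rw [← hFtEq] at hOdd
    have hdt : ((2*k+1 : ℕ) : ℤ) ∣ (4*(k:ℤ) - 2 - 2*(Ft:ℤ)) := by
      rw [← ZMod.intCast_zmod_eq_zero_iff_dvd]
      push_cast
      push_cast at hOdd hOdd0
      linear_combination -hOdd + hOdd0 - hEq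
    have hFtle : Ft ≤ 4*k-1 := hFtEq ▸ hFt'le
    have h0 := dvd_small k (4*(k:ℤ) - 2 - 2*(Ft:ℤ)) (by exact_mod_cast hdt) (by omega)
      (by push_cast; omega) (by push_cast; omega)
    omega
  · -- flip on the reversed first arc
    rw [if_neg (fun h => hflip h.symm)] at hOdd0
    have hFtEq : Ft = Ft' + 1 := by rw [hsplit, if_neg hflip]
    have hdt : ((2*k+1 : ℕ) : ℤ) ∣ (4*(k:ℤ) - 2*(Ft':ℤ)) := by
      rw [← ZMod.intCast_zmod_eq_zero_iff_dvd]
      push_cast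
      push_cast at hOdd hOdd0
      linear_combination -hOdd + hOdd0 - hEq
    have h0 := dvd_small k (4*(k:ℤ) - 2*(Ft':ℤ)) (by exact_mod_cast hdt) (by omega)
      (by push_cast; omega) (by push_cast; omega)
    omega


lemma backward (k : ℕ) (hk : 1 ≤ k) {V : Type*} [LinearOrder V] (G : SimpleGraph V)
    (c : V → ZMod (2 * k + 1)) (hc : ∀ u v, G.Adj u v → c u ≠ c v) :
    (∃ (s : GadgetVertex k G → Bool) (f : GadgetVertex k G → ZMod (2 * k + 1)),
        ∀ x y, ((s x = s y ∧ GadgetArc k G x y) ∨ (s x ≠ s y ∧ GadgetArc k G y x)) →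
          f y = f x + 1) := by
  classical
  refine ⟨Sum.elim (fun _ => false) (fun p => cond p.2.1
      (decide (((p.2.2 : ℕ)+1) % 2 = 1 ∧ (p.2.2 : ℕ)+1 ≤ aVal k (c p.1.1.2 - c p.1.1.1)))
      (decide (((p.2.2 : ℕ)+1) % 2 = 1 ∧ (p.2.2 : ℕ)+1 ≤ rVal k (c p.1.1.2 - c p.1.1.1)))),
    Sum.elim c (fun p => cond p.2.1
      (c p.1.1.1 + (((p.2.2 : ℕ)+1 : ℕ) : ZMod (2*k+1)) + 2
        - 2 * ((min ((p.2.2 : ℕ)+1) (aVal k (c p.1.1.2 - c p.1.1.1) + 1) : ℕ) : ZMod (2*k+1)))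
      (c p.1.1.1 + (((p.2.2 : ℕ)+1 : ℕ) : ZMod (2*k+1))
        - 2 * ((min ((p.2.2 : ℕ)+1) (rVal k (c p.1.1.2 - c p.1.1.1)) : ℕ) : ZMod (2*k+1)))), ?_⟩
  rintro x y (⟨hs, ha⟩ | ⟨hs, ha⟩) <;>
    rcases x with u | ⟨e, b, t⟩ <;> rcases y with u' | ⟨e', b', t'⟩
  -- Branch 1: s x = s y, Arc x y
  · exact ha.elim
  · -- inl u → inr (e',b',t') : t'=0, u=e'.1.1, b'=false
    obtain ⟨ht, hu, hb⟩ := ha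
    subst hu; subst hb
    simp only [Sum.elim_inl, Sum.elim_inr, Bool.cond_false, ht] at hs ⊢
    have hP : ¬(((0:ℕ)+1) % 2 = 1 ∧ (0:ℕ)+1 ≤ rVal k (c e'.1.2 - c e'.1.1)) := by
      simpa using hs
    have hR : rVal k (c e'.1.2 - c e'.1.1) = 0 := by omega
    rw [hR]
    norm_num
  · -- inr (e,b,t) → inl u'
    rcases ha with ⟨ht, hu, hb⟩ | ⟨ht, hu⟩
    · subst hu; subst hb
      have h1 := aVal_ge k (c e.1.2 - c e.1.1)
      simp only [Sum.elim_inl, Sum.elim_inr, Bool.cond_true, ht] at hs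
      have hP : ¬(((0:ℕ)+1) % 2 = 1 ∧ (0:ℕ)+1 ≤ aVal k (c e.1.2 - c e.1.1)) := by
        simpa using hs
      exact absurd ⟨by omega, by omega⟩ hP
    · subst hu
      cases b
      · simp only [Sum.elim_inl, Sum.elim_inr, Bool.cond_false, ht] at hs ⊢
        have hRe := rVal_even k (c e.1.2 - c e.1.1)
        have hRl := rVal_le k (c e.1.2 - c e.1.1)
        have hP : ¬((4*k-2+1) % 2 = 1 ∧ 4*k-2+1 ≤ rVal k (c e.1.2 - c e.1.1)) := by
          simpa using hs
        have hR : rVal k (c e.1.2 - c e.1.1) ≤ 4*k - 2 := by omega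
        rw [Nat.min_eq_right (by omega), show (4*k-2+1 : ℕ) = 4*k-1 from by omega,
          cast41 k hk]
        have key := rVal_key k (c e.1.2 - c e.1.1)
        linear_combination -key
      · simp only [Sum.elim_inl, Sum.elim_inr, Bool.cond_true, ht] at hs ⊢
        have hAo := aVal_odd k (c e.1.2 - c e.1.1)
        have hd : c e.1.2 - c e.1.1 ≠ 0 := sub_ne_zero.mpr (Ne.symm (hc _ _ e.2.1))
        have hAl := aVal_le k hk _ hd
        have hP : ¬((4*k-2+1) % 2 = 1 ∧ 4*k-2+1 ≤ aVal k (c e.1.2 - c e.1.1)) := by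
          simpa using hs
        have hA : aVal k (c e.1.2 - c e.1.1) ≤ 4*k - 3 := by omega
        rw [Nat.min_eq_right (by omega), show (4*k-2+1 : ℕ) = 4*k-1 from by omega,
          cast41 k hk]
        have key := aVal_key k (c e.1.2 - c e.1.1)
        push_cast
        push_cast at key
        linear_combination -key
  · -- inr → inr, same direction
    obtain ⟨rfl, rfl, ht⟩ := ha
    cases b
    · simp only [Sum.elim_inr, Bool.cond_false, ht] at hs ⊢
      rw [decide_eq_decide] at hs
      have hRe := rVal_even k (c e.1.2 - c e.1.1)
      have ht2 : (t':ℕ) < 4*k-1 := t'.isLt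
      by_cases hq : (t:ℕ) + 1 + 1 ≤ rVal k (c e.1.2 - c e.1.1)
      · exfalso; omega
      · rw [Nat.min_eq_right (by omega), Nat.min_eq_right (by omega)]
        push_cast; ring
    · simp only [Sum.elim_inr, Bool.cond_true, ht] at hs ⊢
      rw [decide_eq_decide] at hs
      have hAo := aVal_odd k (c e.1.2 - c e.1.1)
      by_cases hq : (t:ℕ) + 1 ≤ aVal k (c e.1.2 - c e.1.1)
      · exfalso; omega
      · rw [Nat.min_eq_right (by omega), Nat.min_eq_right (by omega)]
        push_cast; ring
  -- Branch 2: s x ≠ s y, Arc y x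
  · exact ha.elim
  · -- x = inl u, y = inr (e',b',t'), Arc y x
    rcases ha with ⟨ht, hu, hb⟩ | ⟨ht, hu⟩
    · subst hu; subst hb
      have h1 := aVal_ge k (c e'.1.2 - c e'.1.1)
      simp only [Sum.elim_inl, Sum.elim_inr, Bool.cond_true, ht] at hs ⊢
      rw [Nat.min_eq_left (by omega)]
      push_cast; ring
    · subst hu
      cases b'
      · simp only [Sum.elim_inl, Sum.elim_inr, Bool.cond_false, ht] at hs ⊢
        have hRe := rVal_even k (c e'.1.2 - c e'.1.1)
        have hRl := rVal_le k (c e'.1.2 - c e'.1.1)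
        have hP : 4*k-2+1 ≤ rVal k (c e'.1.2 - c e'.1.1) := by
          by_contra h
          apply hs; simp [h]
        have hR : rVal k (c e'.1.2 - c e'.1.1) = 4*k := by omega
        have key := rVal_key k (c e'.1.2 - c e'.1.1)
        rw [hR] at key
        rw [hR, Nat.min_eq_left (by omega), show (4*k-2+1 : ℕ) = 4*k-1 from by omega,
          cast41 k hk]
        push_cast at key ⊢
        linear_combination key
      · simp only [Sum.elim_inl, Sum.elim_inr, Bool.cond_true, ht] at hs ⊢
        have hd : c e'.1.2 - c e'.1.1 ≠ 0 := sub_ne_zero.mpr (Ne.symm (hc _ _ e'.2.1))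
        have hAl := aVal_le k hk _ hd
        have hP : 4*k-2+1 ≤ aVal k (c e'.1.2 - c e'.1.1) := by
          by_contra h
          apply hs; simp [h]
        have hA : aVal k (c e'.1.2 - c e'.1.1) = 4*k - 1 := by omega
        have key := aVal_key k (c e'.1.2 - c e'.1.1)
        rw [hA] at key
        rw [Nat.min_eq_left (by omega), show (4*k-2+1 : ℕ) = 4*k-1 from by omega,
          cast41 k hk]
        rw [cast41 k hk] at key
        push_cast at key ⊢
        linear_combination key
  · -- x = inr (e,b,t), y = inl u': Arc (inl u') (inr (e,b,t))
    obtain ⟨ht, hu, hb⟩ := ha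
    subst hu; subst hb
    simp only [Sum.elim_inl, Sum.elim_inr, Bool.cond_false, ht] at hs ⊢
    have hP : 1 ≤ rVal k (c e.1.2 - c e.1.1) := by
      by_contra h
      apply hs; simp [h]
    rw [Nat.min_eq_left (by omega)]
    push_cast; ring
  · -- inr → inr reversed
    obtain ⟨rfl, rfl, ht⟩ := ha
    cases b'
    · simp only [Sum.elim_inr, Bool.cond_false, ht] at hs ⊢
      simp only [ne_eq, decide_eq_decide] at hs
      have hRe := rVal_even k (c e'.1.2 - c e'.1.1)
      by_cases hq : (t':ℕ) + 1 + 1 ≤ rVal k (c e'.1.2 - c e'.1.1)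
      · rw [Nat.min_eq_left (by omega), Nat.min_eq_left (by omega)]
        push_cast; ring
      · exfalso; omega
    · simp only [Sum.elim_inr, Bool.cond_true, ht] at hs ⊢
      simp only [ne_eq, decide_eq_decide] at hs
      have hAo := aVal_odd k (c e'.1.2 - c e'.1.1)
      by_cases hq : (t':ℕ) + 1 ≤ aVal k (c e'.1.2 - c e'.1.1)
      · rw [Nat.min_eq_left (by omega), Nat.min_eq_left (by omega)]
        push_cast; ring
      · exfalso; omega


/-- For any `k ≥ 1` and any simple graph `G`, the gadget `G⃗⁽ᵏ⁾` admits a pushable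
homomorphism to the directed cycle `C⃗_{2k+1}` (vertices `ZMod (2k+1)`, arcs `i → i+1`)
iff `G` is properly `(2k+1)`-colorable. Pushing the set `{x | s x = true}` replaces the
arc between `x` and `y` by its reverse iff exactly one endpoint is in the set. -/
theorem stmt16 (k : ℕ) (hk : 1 ≤ k) {V : Type*} [LinearOrder V] (G : SimpleGraph V) :
    (∃ (s : GadgetVertex k G → Bool) (f : GadgetVertex k G → ZMod (2 * k + 1)),
        ∀ x y, ((s x = s y ∧ GadgetArc k G x y) ∨ (s x ≠ s y ∧ GadgetArc k G y x)) →
          f y = f x + 1)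
    ↔ ∃ c : V → ZMod (2 * k + 1), ∀ u v, G.Adj u v → c u ≠ c v := by
  constructor
  · rintro ⟨s, f, H⟩
    refine ⟨fun w => f (Sum.inl w), ?_⟩
    intro u v hadj
    have hne : u ≠ v := hadj.ne
    rcases hne.lt_or_gt with h | h
    · exact forward k hk G s f H u v hadj h
    · exact (forward k hk G s f H v u hadj.symm h).symm
  · rintro ⟨c, hc⟩
    exact backward k hk G c hc
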